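/- There is an absolute constant C > 0 (depending only on the data in the context) such that: if f is a continuous function on ℂ with f ∈ VO, then for every ε > 0 there exists a bounded function g : ℂ → ℂ with compact support such that sup_{z∈ℂ} ω(f − g)(z) ≤ C ε. (Consequently, every Hankel operator with VO symbol is approximated in operator norm by Hankel operators with bounded, compactly supported symbols.) -/

import Mathlib

open MeasureTheory Filter Metric Set
open scoped ENNReal

/-- The oscillation `ω(f)(z) = sup{ |f(z) - f(w)| : β(z,w) < 1 }`. -/
noncomputable def omegaC (β : ℂ → ℂ → ℝ) (f : ℂ → ℂ) (z : ℂ) : ℝ :=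
  sSup ((fun w => ‖f z - f w‖) '' {w : ℂ | β z w < 1})

/-- There is a constant `C > 0` such that: if `f` is continuous and
`f ∈ VO`, then for every `ε > 0` there is a bounded, compactly supported `g : ℂ → ℂ` with
`sup_z ω(f - g)(z) ≤ C ε`. -/
theorem stmt13
    (ρ : ℂ → ℝ) (hρ : ∀ z, 0 < ρ z)
    (C₀ θ : ℝ) (hC₀ : 0 < C₀) (hθ : 0 < θ)
    (hρ₁ : ∀ (z w : ℂ) (r : ℝ), 0 < r → r ≤ 1 → w ∈ Metric.ball z (r * ρ z) →
      C₀⁻¹ ≤ ρ w / ρ z ∧ ρ w / ρ z ≤ C₀)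
    (hρ₂ : ∀ (z w : ℂ) (r : ℝ), 1 < r → w ∈ Metric.ball z (r * ρ z) →
      (C₀ * r ^ θ)⁻¹ ≤ ρ w / ρ z ∧ ρ w / ρ z ≤ C₀ * r ^ θ)
    (β : ℂ → ℂ → ℝ)
    (hβsymm : ∀ z w, β z w = β w z) (hβnonneg : ∀ z w, 0 ≤ β z w)
    (hβeq : ∀ z w, β z w = 0 ↔ z = w)
    (hβtri : ∀ z w u, β z u ≤ β z w + β w u)
    (δ : ℝ) (hδ : 0 < δ ∧ δ < 1)
    (hβ : ∀ r : ℝ, 0 < r → ∃ Cr : ℝ, 0 < Cr ∧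
      (∀ z w : ℂ, w ∈ Metric.ball z (r * ρ z) →
        Cr⁻¹ * (‖z - w‖ / ρ z) ≤ β z w ∧
        β z w ≤ Cr * (‖z - w‖ / ρ z)) ∧
      (∀ z w : ℂ, w ∉ Metric.ball z (r * ρ z) →
        Cr⁻¹ * (‖z - w‖ / ρ z) ^ δ ≤ β z w ∧
        β z w ≤ Cr * (‖z - w‖ / ρ z) ^ (2 - δ))) :
    ∃ C : ℝ, 0 < C ∧ ∀ f : ℂ → ℂ, Continuous f →
      Tendsto (omegaC β f) (cocompact ℂ) (nhds 0) →
      ∀ ε : ℝ, 0 < ε → ∃ g : ℂ → ℂ, HasCompactSupport g ∧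
        (∃ M : ℝ, ∀ z, ‖g z‖ ≤ M) ∧
        ∀ z : ℂ, omegaC β (fun w => f w - g w) z ≤ C * ε := by
  obtain ⟨hδ0, hδ1⟩ := hδ
  have hδne : δ ≠ 0 := ne_of_gt hδ0
  obtain ⟨C₁, hC₁, hnear₁, hfar₁⟩ := hβ 1 one_pos
  refine ⟨10, by norm_num, ?_⟩
  intro f hf hVO ε hε
  -- sub-unit (in β) balls are Euclidean-bounded
  have hball : ∀ t : ℝ, 0 < t → ∀ z w : ℂ, β z w < t →
      ‖z - w‖ ≤ max 1 ((C₁ * t) ^ (1/δ)) * ρ z := by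
    intro t ht z w hzw
    by_cases hw : w ∈ Metric.ball z (1 * ρ z)
    · have h0 : dist w z < 1 * ρ z := Metric.mem_ball.mp hw
      calc ‖z - w‖ = dist w z := by rw [dist_comm, Complex.dist_eq]
        _ ≤ 1 * ρ z := le_of_lt h0
        _ ≤ max 1 ((C₁*t)^(1/δ)) * ρ z :=
            mul_le_mul_of_nonneg_right (le_max_left _ _) (hρ z).le
    · have hfar := (hfar₁ z w hw).1
      set D := ‖z - w‖ / ρ z with hD
      have hD0 : 0 ≤ D := div_nonneg (norm_nonneg _) (hρ z).le
      have h2 : D ^ δ < C₁ * t := by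
        have h1 : C₁⁻¹ * D ^ δ < t := lt_of_le_of_lt hfar hzw
        calc D ^ δ = C₁ * (C₁⁻¹ * D ^ δ) := by field_simp
          _ < C₁ * t := by exact (mul_lt_mul_iff_right₀ hC₁).mpr h1
      have h3 : D ≤ (C₁ * t) ^ (1/δ) := by
        have h4 := Real.rpow_le_rpow (Real.rpow_nonneg hD0 δ) h2.le
          (by positivity : (0:ℝ) ≤ 1/δ)
        rwa [← Real.rpow_mul hD0, mul_one_div, div_self hδne, Real.rpow_one] at h4
      calc ‖z - w‖ = D * ρ z := by rw [hD, div_mul_cancel₀ _ (hρ z).ne']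
        _ ≤ (C₁*t)^(1/δ) * ρ z := mul_le_mul_of_nonneg_right h3 (hρ z).le
        _ ≤ _ := mul_le_mul_of_nonneg_right (le_max_right _ _) (hρ z).le
  -- boundedness of the oscillation set
  have hbdd : ∀ z : ℂ, BddAbove ((fun w => ‖f z - f w‖) '' {w | β z w < 1}) := by
    intro z
    have hsub : {w : ℂ | β z w < 1} ⊆ Metric.closedBall z (max 1 ((C₁ * 1) ^ (1/δ)) * ρ z) := by
      intro w hw
      rw [Metric.mem_closedBall, dist_comm, Complex.dist_eq]
      exact hball 1 one_pos z w hw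
    have hcont : Continuous fun w => ‖f z - f w‖ :=
      continuous_norm.comp (continuous_const.sub hf)
    exact BddAbove.mono (Set.image_mono hsub)
      (((isCompact_closedBall _ _).image hcont).bddAbove)
  -- the vanishing-oscillation compact set
  obtain ⟨K, hKc, hKs⟩ := mem_cocompact.mp (hVO (Metric.ball_mem_nhds (0:ℝ) hε))
  have hωK : ∀ z ∉ K, ∀ w : ℂ, β z w < 1 → ‖f z - f w‖ ≤ ε := by
    intro z hz w hw
    have h1 : omegaC β f z < ε := by
      have h2 := hKs (Set.mem_compl hz)
      rw [Set.mem_preimage, Metric.mem_ball, Real.dist_eq, sub_zero] at h2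
      exact lt_of_le_of_lt (le_abs_self _) h2
    exact le_of_lt (lt_of_le_of_lt (le_csSup (hbdd z) ⟨w, hw, rfl⟩) h1)
  -- a β-radius T with K ⊆ {β(0,·) ≤ T - 1}
  obtain ⟨R, hRK⟩ := hKc.isBounded.subset_closedBall (0:ℂ)
  set r : ℝ := max 1 ((R + 1) / ρ 0) with hrdef
  have hr1 : (1:ℝ) ≤ r := le_max_left _ _
  have hr0 : 0 < r := lt_of_lt_of_le one_pos hr1
  have hRr : R + 1 ≤ r * ρ 0 := by
    calc R + 1 = ((R+1)/ρ 0) * ρ 0 := (div_mul_cancel₀ _ (hρ 0).ne').symm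
      _ ≤ r * ρ 0 := mul_le_mul_of_nonneg_right (le_max_right _ _) (hρ 0).le
  obtain ⟨Cr, hCr, hnear_r, -⟩ := hβ r hr0
  set T : ℝ := Cr * r + 1 with hTdef
  have hT1 : 1 < T := by have : 0 < Cr * r := mul_pos hCr hr0; rw [hTdef]; linarith
  have hKT : ∀ z ∈ K, β 0 z ≤ T - 1 := by
    intro z hz
    have hzR : ‖z‖ ≤ R := by
      have h := hRK hz
      rwa [Metric.mem_closedBall, Complex.dist_eq, sub_zero] at h
    have hzball : z ∈ Metric.ball (0:ℂ) (r * ρ 0) := by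
      rw [Metric.mem_ball, Complex.dist_eq, sub_zero]
      linarith
    have h := (hnear_r 0 z hzball).2
    have h5 : ‖0 - z‖ / ρ 0 ≤ r := by
      rw [zero_sub, norm_neg, div_le_iff₀ (hρ 0)]
      linarith
    have h6 : β 0 z ≤ Cr * r := h.trans (mul_le_mul_of_nonneg_left h5 hCr.le)
    rw [hTdef]; linarith
  -- the truncation level M
  set c : ℂ := f 0 with hc
  set RM : ℝ := max 1 ((C₁ * (T + 2)) ^ (1/δ)) * ρ 0 with hRM
  obtain ⟨M₀, hM₀⟩ := (isCompact_closedBall (0:ℂ) RM).exists_bound_of_continuousOn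
      ((hf.sub continuous_const).continuousOn : ContinuousOn (fun x => f x - c) _)
  set M : ℝ := max 0 M₀ with hMdef
  have hM0 : 0 ≤ M := le_max_left _ _
  have hT2 : 0 < T + 2 := by linarith
  have hMb : ∀ w : ℂ, β 0 w < T + 2 → ‖f w - c‖ ≤ M := by
    intro w hw
    have h1 := hball (T+2) hT2 0 w hw
    have hmem : w ∈ Metric.closedBall (0:ℂ) RM := by
      rw [Metric.mem_closedBall, Complex.dist_eq, sub_zero]
      rw [zero_sub, norm_neg] at h1
      exact h1
    have h2 := hM₀ w hmem
    exact h2.trans (le_max_right 0 M₀)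
  -- real truncation `tr` and complex truncation `τ`
  set tr : ℝ → ℝ := fun t => max (min M t) (-M) with htr
  have htr_lip : ∀ s t : ℝ, |tr s - tr t| ≤ |s - t| := by
    intro s t
    refine (abs_max_sub_max_le_abs _ _ _).trans ?_
    have h := abs_min_sub_min_le_max M s M t
    simpa using h
  have htr_id : ∀ t : ℝ, |t| ≤ M → tr t = t := by
    intro t ht
    rw [abs_le] at ht
    rw [htr]
    simp only
    rw [min_eq_right ht.2, max_eq_left ht.1]
  have htr_b : ∀ t : ℝ, |tr t| ≤ M := by
    intro t
    rw [abs_le]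
    refine ⟨le_max_right _ _, max_le (min_le_left _ _) (by linarith)⟩
  set τ : ℂ → ℂ := fun ζ => ((tr ζ.re : ℝ) : ℂ) + ((tr ζ.im : ℝ) : ℂ) * Complex.I with hτ
  have habs2 : ∀ a b : ℝ, ‖(a:ℂ) + (b:ℂ) * Complex.I‖ ≤ |a| + |b| := by
    intro a b
    refine (norm_add_le _ _).trans ?_
    simp [Complex.norm_real, Real.norm_eq_abs]
  have hre : ∀ a b : ℂ, |a.re - b.re| ≤ ‖a - b‖ := by
    intro a b
    simpa using Complex.abs_re_le_norm (a - b)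
  have him : ∀ a b : ℂ, |a.im - b.im| ≤ ‖a - b‖ := by
    intro a b
    simpa using Complex.abs_im_le_norm (a - b)
  have hτ_lip : ∀ a b : ℂ, ‖τ a - τ b‖ ≤ 2 * ‖a - b‖ := by
    intro a b
    have h1 : τ a - τ b = ((tr a.re - tr b.re : ℝ) : ℂ) + ((tr a.im - tr b.im : ℝ):ℂ) * Complex.I := by
      rw [hτ]; push_cast; ring
    rw [h1]
    refine (habs2 _ _).trans ?_
    have h2 := (htr_lip a.re b.re).trans (hre a b)
    have h3 := (htr_lip a.im b.im).trans (him a b)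
    linarith
  have hτ_id : ∀ ζ : ℂ, ‖ζ‖ ≤ M → τ ζ = ζ := by
    intro ζ hζ
    have h1 : |ζ.re| ≤ M := (Complex.abs_re_le_norm ζ).trans hζ
    have h2 : |ζ.im| ≤ M := (Complex.abs_im_le_norm ζ).trans hζ
    rw [hτ]
    simp only
    rw [htr_id _ h1, htr_id _ h2, Complex.re_add_im]
  have hτ_b : ∀ ζ : ℂ, ‖τ ζ‖ ≤ 2 * M := by
    intro ζ
    rw [hτ]
    refine (habs2 _ _).trans ?_
    have := htr_b ζ.re
    have := htr_b ζ.im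
    linarith
  -- the cutoff
  set B : ℝ := ‖c‖ + 2 * M with hB
  have hB0 : 0 ≤ B := add_nonneg (norm_nonneg _) (by linarith)
  set W : ℝ := max 1 (B / ε) with hW
  have hW1 : (1:ℝ) ≤ W := le_max_left _ _
  have hW0 : 0 < W := lt_of_lt_of_le one_pos hW1
  have hBW : B ≤ ε * W := by
    have h1 : B / ε ≤ W := le_max_right _ _
    calc B = ε * (B / ε) := by field_simp
      _ ≤ ε * W := mul_le_mul_of_nonneg_left h1 hε.le
  set φ : ℂ → ℝ := fun z => max (min 1 ((T + W - β 0 z) / W)) 0 with hφ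
  have hφ_mem : ∀ z, 0 ≤ φ z ∧ φ z ≤ 1 :=
    fun z => ⟨le_max_right _ _, max_le (min_le_left _ _) zero_le_one⟩
  have hφ1 : ∀ z, β 0 z ≤ T → φ z = 1 := by
    intro z hz
    have h1 : (1:ℝ) ≤ (T + W - β 0 z)/W := by
      rw [le_div_iff₀ hW0]; linarith
    rw [hφ]
    simp only
    rw [min_eq_left h1, max_eq_left zero_le_one]
  have hφ0 : ∀ z, T + W ≤ β 0 z → φ z = 0 := by
    intro z hz
    have h1 : (T + W - β 0 z)/W ≤ 0 :=
      div_nonpos_of_nonpos_of_nonneg (by linarith) hW0.le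
    rw [hφ]
    simp only
    rw [max_eq_right ((min_le_right _ _).trans h1)]
  have hφ_lip : ∀ z w : ℂ, |φ z - φ w| ≤ β z w / W := by
    intro z w
    have h1 := abs_max_sub_max_le_abs (min 1 ((T+W-β 0 z)/W)) (min 1 ((T+W-β 0 w)/W)) 0
    have h2 := abs_min_sub_min_le_max 1 ((T+W-β 0 z)/W) 1 ((T+W-β 0 w)/W)
    have h3 : (T+W-β 0 z)/W - (T+W-β 0 w)/W = (β 0 w - β 0 z)/W := by ring
    have h4 : |β 0 w - β 0 z| ≤ β z w := by
      rw [abs_sub_le_iff]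
      constructor
      · have := hβtri 0 z w
        linarith
      · have h5 := hβtri 0 w z
        have h6 := hβsymm w z
        linarith
    have h7 : |(β 0 w - β 0 z)/W| ≤ β z w / W := by
      rw [abs_div, abs_of_pos hW0]
      gcongr
    calc |φ z - φ w| ≤ |min 1 ((T+W-β 0 z)/W) - min 1 ((T+W-β 0 w)/W)| := h1
      _ ≤ max |(1:ℝ) - 1| |(T+W-β 0 z)/W - (T+W-β 0 w)/W| := h2
      _ = |(β 0 w - β 0 z)/W| := by rw [h3]; simp
      _ ≤ β z w / W := h7
  -- the approximant
  refine ⟨fun z => ((φ z : ℝ) : ℂ) * (c + τ (f z - c)), ?_, ⟨B, ?_⟩, ?_⟩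
  · -- compact support
    have hTW : 0 < T + W := by linarith
    apply HasCompactSupport.intro (isCompact_closedBall (0:ℂ) (max 1 ((C₁ * (T + W)) ^ (1/δ)) * ρ 0))
    intro x hx
    have hβx : T + W ≤ β 0 x := by
      by_contra h
      push_neg at h
      have h1 := hball (T + W) hTW 0 x h
      apply hx
      rw [Metric.mem_closedBall, Complex.dist_eq, sub_zero]
      rw [zero_sub, norm_neg] at h1
      exact h1
    rw [hφ0 x hβx]
    simp
  · -- boundedness
    intro z
    rw [norm_mul]
    have h1 : ‖((φ z : ℝ) : ℂ)‖ ≤ 1 := by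
      rw [Complex.norm_real, Real.norm_eq_abs, abs_of_nonneg (hφ_mem z).1]
      exact (hφ_mem z).2
    have h2 : ‖c + τ (f z - c)‖ ≤ B := by
      refine (norm_add_le _ _).trans ?_
      have := hτ_b (f z - c)
      rw [hB]; linarith
    calc ‖((φ z : ℝ) : ℂ)‖ * ‖c + τ (f z - c)‖
        ≤ 1 * B := mul_le_mul h1 h2 (norm_nonneg _) zero_le_one
      _ = B := one_mul B
  · -- the oscillation estimate
    intro z
    rw [omegaC]
    apply Real.sSup_le
    · rintro x ⟨w, hw, rfl⟩
      simp only [Set.mem_setOf_eq] at hw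
      simp only
      set ζ : ℂ := f z - c with hζ
      set η : ℂ := f w - c with hη
      have hid : (f z - ((φ z : ℝ) : ℂ) * (c + τ ζ)) - (f w - ((φ w : ℝ) : ℂ) * (c + τ η))
          = ((ζ - τ ζ) - (η - τ η)) + ((1 - ((φ z : ℝ) : ℂ)) * (τ ζ - τ η)
            + (((φ w : ℝ) : ℂ) - ((φ z : ℝ) : ℂ)) * (c + τ η)) := by
        rw [hζ, hη]; ring
      rw [hid]
      have hζη : ζ - η = f z - f w := by rw [hζ, hη]; ring
      have habs_sub : ∀ a b : ℂ, ‖a - b‖ ≤ ‖a‖ + ‖b‖ := by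
        intro a b
        simpa [sub_eq_add_neg] using norm_add_le a (-b)
      -- Term A
      have hA : ‖(ζ - τ ζ) - (η - τ η)‖ ≤ 3 * ε := by
        by_cases hzK : z ∈ K
        · have hz0 : β 0 z ≤ T - 1 := hKT z hzK
          have hw0 : β 0 w < T := lt_of_le_of_lt (hβtri 0 z w) (by linarith)
          have h1 : τ ζ = ζ := hτ_id ζ (hMb z (by linarith))
          have h2 : τ η = η := hτ_id η (hMb w (by linarith))
          rw [h1, h2]
          simp
          positivity
        · have h4 : ‖f z - f w‖ ≤ ε := hωK z hzK w hw
          have h5 : (ζ - τ ζ) - (η - τ η) = (ζ - η) - (τ ζ - τ η) := by ring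
          have h6 : ‖τ ζ - τ η‖ ≤ 2 * ε := by
            refine (hτ_lip ζ η).trans ?_
            rw [hζη]; linarith
          rw [h5]
          refine (habs_sub _ _).trans ?_
          rw [hζη]
          linarith
      -- Term B
      have hB2 : ‖(1 - ((φ z : ℝ) : ℂ)) * (τ ζ - τ η)‖ ≤ 2 * ε := by
        by_cases hzT : β 0 z ≤ T
        · rw [hφ1 z hzT]
          simp
          positivity
        · push_neg at hzT
          have hzK : z ∉ K := by
            intro h
            have := hKT z h
            linarith
          rw [norm_mul]
          have h1 : ‖1 - ((φ z : ℝ) : ℂ)‖ ≤ 1 := by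
            rw [show (1 - ((φ z : ℝ) : ℂ)) = ((1 - φ z : ℝ) : ℂ) by push_cast; ring,
              Complex.norm_real, Real.norm_eq_abs, abs_of_nonneg (by linarith [(hφ_mem z).2])]
            linarith [(hφ_mem z).1]
          have h2 : ‖τ ζ - τ η‖ ≤ 2 * ε := by
            refine (hτ_lip ζ η).trans ?_
            rw [hζη]
            linarith [hωK z hzK w hw]
          calc ‖1 - ((φ z : ℝ) : ℂ)‖ * ‖τ ζ - τ η‖
              ≤ 1 * (2*ε) := mul_le_mul h1 h2 (norm_nonneg _) zero_le_one
            _ = 2*ε := one_mul _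
      -- Term C
      have hC3 : ‖(((φ w : ℝ) : ℂ) - ((φ z : ℝ) : ℂ)) * (c + τ η)‖ ≤ ε := by
        rw [norm_mul]
        have h1 : ‖(((φ w : ℝ) : ℂ) - ((φ z : ℝ) : ℂ))‖ ≤ 1 / W := by
          rw [show ((((φ w : ℝ) : ℂ)) - ((φ z : ℝ) : ℂ)) = ((φ w - φ z : ℝ):ℂ) by push_cast; ring,
            Complex.norm_real, Real.norm_eq_abs]
          refine (hφ_lip w z).trans ?_
          have hwz : β w z < 1 := by rw [hβsymm w z]; exact hw
          gcongr
        have h2 : ‖c + τ η‖ ≤ B := by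
          refine (norm_add_le _ _).trans ?_
          have := hτ_b η
          rw [hB]; linarith
        calc ‖(((φ w : ℝ) : ℂ)) - ((φ z : ℝ) : ℂ)‖ * ‖c + τ η‖
            ≤ (1/W) * B := mul_le_mul h1 h2 (norm_nonneg _) (by positivity)
          _ ≤ ε := by
              rw [div_mul_eq_mul_div, one_mul, div_le_iff₀ hW0]
              linarith
      calc ‖((ζ - τ ζ) - (η - τ η)) + ((1 - ((φ z : ℝ) : ℂ)) * (τ ζ - τ η)
            + (((φ w : ℝ) : ℂ) - ((φ z : ℝ) : ℂ)) * (c + τ η))‖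
          ≤ ‖(ζ - τ ζ) - (η - τ η)‖ + ‖(1 - ((φ z : ℝ) : ℂ)) * (τ ζ - τ η)
            + (((φ w : ℝ) : ℂ) - ((φ z : ℝ) : ℂ)) * (c + τ η)‖ := norm_add_le _ _
        _ ≤ ‖(ζ - τ ζ) - (η - τ η)‖ + (‖(1 - ((φ z : ℝ) : ℂ)) * (τ ζ - τ η)‖
            + ‖(((φ w : ℝ) : ℂ) - ((φ z : ℝ) : ℂ)) * (c + τ η)‖) := by
              have := norm_add_le ((1 - ((φ z : ℝ) : ℂ)) * (τ ζ - τ η))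
                ((((φ w : ℝ) : ℂ) - ((φ z : ℝ) : ℂ)) * (c + τ η))
              linarith
        _ ≤ 10 * ε := by linarith
    · positivity
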